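/- Let X be a real random variable with 0 < X ≤ 1 almost surely and let ρ > 0. Suppose a < 0 is a real number satisfying ρ·𝔼[X·a/(X·a − 1)] = 1. Then there exist an open neighborhood U ⊆ ℂ of 0 and a holomorphic function q : U → ℂ with q(0) = a such that z·q(z) + ρ·𝔼[X·q(z)/(X·q(z) − 1)] = 1 for all z ∈ U. Consequently m(z) := z·q(z) is holomorphic on U, satisfies m(0) = 0 and m′(0) = a, and satisfies the self-consistent equation m(z) + ρ·𝔼[X·m(z)/(X·m(z) − z)] = 1 for all nonzero z ∈ U. -/

import Mathlib

open MeasureTheory Metric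

private lemma aux_norm_bound (w : ℂ) (hw : w.re < 0) {x : ℝ} (hx0 : 0 < x) :
    1 ≤ ‖(x:ℂ) * w - 1‖ := by
  have h1 : ((x:ℂ) * w - 1).re = x * w.re - 1 := by simp
  have h2 : x * w.re ≤ 0 := mul_nonpos_of_nonneg_of_nonpos hx0.le hw.le
  calc (1:ℝ) ≤ -(((x:ℂ) * w - 1).re) := by rw [h1]; linarith
    _ ≤ |((x:ℂ) * w - 1).re| := neg_le_abs _
    _ ≤ ‖(x:ℂ) * w - 1‖ := Complex.abs_re_le_norm _

private lemma aux_ne_zero (w : ℂ) (hw : w.re < 0) {x : ℝ} (hx0 : 0 < x) :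
    (x:ℂ) * w - 1 ≠ 0 := by
  intro h
  have := aux_norm_bound w hw hx0
  rw [h] at this; simp at this; linarith

theorem deterministic_equivalent_near_zero
    {Ω : Type*} [MeasureSpace Ω] [IsProbabilityMeasure (volume : Measure Ω)]
    (X : Ω → ℝ) (hX : Measurable X) (hbdd : ∀ᵐ ω, X ω ∈ Set.Ioc 0 1)
    (ρ : ℝ) (hρ : 0 < ρ) (a : ℝ) (ha : a < 0)
    (hfix : ρ * ∫ ω, X ω * a / (X ω * a - 1) = 1) :
    ∃ U : Set ℂ, IsOpen U ∧ (0:ℂ) ∈ U ∧ ∃ q : ℂ → ℂ, DifferentiableOn ℂ q U ∧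
      q 0 = (a:ℂ) ∧
      (∀ z ∈ U, z * q z + (ρ:ℂ) * ∫ ω, (X ω : ℂ) * q z / ((X ω : ℂ) * q z - 1) = 1) ∧
      DifferentiableOn ℂ (fun z => z * q z) U ∧
      (fun z => z * q z) 0 = 0 ∧
      deriv (fun z => z * q z) 0 = (a:ℂ) ∧
      ∀ z ∈ U, z ≠ 0 →
        z * q z + (ρ:ℂ) * ∫ ω, (X ω : ℂ) * (z * q z) / ((X ω : ℂ) * (z * q z) - z) = 1 := by
  classical
  have hm : Measurable fun ω => (X ω : ℂ) := Complex.measurable_ofReal.comp hX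
  set H : Set ℂ := {w | w.re < 0} with hHdef
  have Hopen : IsOpen H := isOpen_lt Complex.continuous_re continuous_const
  have hH0 : ∀ w ∈ H, w ≠ 0 := by
    intro w hw h0; rw [h0] at hw; simp [hHdef] at hw
  set F : ℂ → Ω → ℂ := fun w ω => (X ω : ℂ) * w / ((X ω : ℂ) * w - 1) with hFdef
  set F' : ℂ → Ω → ℂ := fun w ω => -(X ω : ℂ) / (((X ω : ℂ) * w - 1) ^ 2) with hF'def
  have measF : ∀ w, AEStronglyMeasurable (F w) volume := fun w =>
    (((hm.mul_const w).div ((hm.mul_const w).sub_const 1))).aestronglyMeasurable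
  have measF' : ∀ w, AEStronglyMeasurable (F' w) volume := fun w =>
    ((hm.neg.div (((hm.mul_const w).sub_const 1).pow_const 2))).aestronglyMeasurable
  have intF : ∀ w ∈ H, Integrable (F w) volume := by
    intro w hw
    refine (integrable_const ‖w‖).mono' (measF w) ?_
    filter_upwards [hbdd] with ω hω
    have hb := aux_norm_bound w hw hω.1
    have : ‖F w ω‖ = ‖(X ω : ℂ) * w‖ / ‖(X ω : ℂ) * w - 1‖ := norm_div _ _
    rw [this]
    calc ‖(X ω : ℂ) * w‖ / ‖(X ω : ℂ) * w - 1‖ ≤ ‖(X ω : ℂ) * w‖ / 1 := by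
          apply div_le_div_of_nonneg_left ?_ ?_ hb <;> [exact norm_nonneg _; linarith]
      _ = |X ω| * ‖w‖ := by simp [map_mul]
      _ ≤ 1 * ‖w‖ := by
          apply mul_le_mul_of_nonneg_right _ (norm_nonneg _)
          rw [abs_of_pos hω.1]; exact hω.2
      _ = ‖w‖ := one_mul _
  have keyD : ∀ w ∈ H, ∀ ω, 0 < X ω → HasDerivAt (fun v => F v ω) (F' w ω) w := by
    intro w hw ω hω
    have hne := aux_ne_zero w hw hω
    have hu : HasDerivAt (fun v : ℂ => (X ω : ℂ) * v) ((X ω : ℂ)) w := by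
      simpa using (hasDerivAt_id w).const_mul ((X ω : ℂ))
    have hv : HasDerivAt (fun v : ℂ => (X ω : ℂ) * v - 1) ((X ω : ℂ)) w := hu.sub_const 1
    have := hu.div hv hne
    refine this.congr_deriv ?_
    rw [hF'def]
    field_simp
    ring
  have hIntDeriv : ∀ w ∈ H, HasDerivAt (fun v => ∫ ω, F v ω) (∫ ω, F' w ω) w := by
    intro w hw
    obtain ⟨ε, εpos, hball⟩ := Metric.isOpen_iff.1 Hopen w hw
    refine (hasDerivAt_integral_of_dominated_loc_of_deriv_le (Metric.ball_mem_nhds w εpos)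
      (Filter.Eventually.of_forall measF) (intF w hw) (measF' w)
      (bound := fun _ => (1:ℝ)) ?_ (integrable_const 1) ?_).2
    · filter_upwards [hbdd] with ω hω
      intro x hx
      have hb := aux_norm_bound x (hball hx) hω.1
      have : ‖F' x ω‖ = |X ω| / ‖(X ω : ℂ) * x - 1‖ ^ 2 := by
        rw [hF'def]; simp [norm_div]
      rw [this]
      have h1 : (1:ℝ) ≤ ‖(X ω : ℂ) * x - 1‖ ^ 2 := by nlinarith
      calc |X ω| / ‖(X ω : ℂ) * x - 1‖ ^ 2 ≤ |X ω| / 1 :=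
            div_le_div_of_nonneg_left (abs_nonneg _) one_pos h1
        _ = |X ω| := div_one _
        _ ≤ 1 := by rw [abs_of_pos hω.1]; exact hω.2
    · filter_upwards [hbdd] with ω hω
      intro x hx
      exact keyD x (hball hx) ω hω.1
  set g : ℂ → ℂ := fun w => (ρ:ℂ) * ∫ ω, F w ω with hgdef
  have haH : (a:ℂ) ∈ H := by simp [hHdef, ha]
  have hane : (a:ℂ) ≠ 0 := by exact_mod_cast ha.ne
  have ga1 : g (a:ℂ) = 1 := by
    have hface : F (a:ℂ) = fun ω => ((X ω * a / (X ω * a - 1) : ℝ) : ℂ) := by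
      funext ω; rw [hFdef]; push_cast; ring
    have ga2 : ∫ ω, ((X ω * a / (X ω * a - 1) : ℝ) : ℂ)
        = (((∫ ω, X ω * a / (X ω * a - 1)) : ℝ) : ℂ) := integral_ofReal
    show (ρ:ℂ) * ∫ ω, F (a:ℂ) ω = 1
    rw [hface, ga2, ← Complex.ofReal_mul, hfix, Complex.ofReal_one]
  -- real integral I₀ and its positivity
  set f₀ : Ω → ℝ := fun ω => X ω / (X ω * a - 1) ^ 2 with hf₀def
  have measf₀ : AEStronglyMeasurable f₀ volume :=
    (hX.div (((hX.mul_const a).sub_const 1).pow_const 2)).aestronglyMeasurable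
  have hden : ∀ ω, 0 < X ω → (1:ℝ) ≤ (X ω * a - 1) ^ 2 := by
    intro ω hω
    have : X ω * a < 0 := mul_neg_of_pos_of_neg hω ha
    nlinarith
  have intf₀ : Integrable f₀ volume := by
    refine (integrable_const (1:ℝ)).mono' measf₀ ?_
    filter_upwards [hbdd] with ω hω
    have h1 := hden ω hω.1
    rw [Real.norm_eq_abs, abs_of_nonneg (div_nonneg hω.1.le (by positivity))]
    calc X ω / (X ω * a - 1) ^ 2 ≤ X ω / 1 := div_le_div_of_nonneg_left hω.1.le one_pos h1
      _ = X ω := div_one _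
      _ ≤ 1 := hω.2
  have posf₀ : 0 < ∫ ω, f₀ ω := by
    rw [integral_pos_iff_support_of_nonneg_ae ?_ intf₀]
    · have hmem : ∀ᵐ ω, ω ∈ Function.support f₀ := by
        filter_upwards [hbdd] with ω hω
        have h1 := hden ω hω.1
        have : 0 < f₀ ω := div_pos hω.1 (by linarith)
        exact this.ne'
      have hz : volume (Function.support f₀)ᶜ = 0 := by
        rw [Function.compl_support]
        simpa [ae_iff] using hmem
      by_contra hle
      push_neg at hle
      have h0 : volume (Function.support f₀) = 0 := le_antisymm hle zero_le
      have : (volume (Set.univ : Set Ω)) ≤ 0 := by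
        calc volume (Set.univ : Set Ω)
            = volume ((Function.support f₀) ∪ (Function.support f₀)ᶜ) := by
              rw [Set.union_compl_self]
          _ ≤ volume (Function.support f₀) + volume (Function.support f₀)ᶜ :=
              measure_union_le _ _
          _ ≤ 0 := by rw [h0, hz]; simp
      simp [measure_univ] at this
    · filter_upwards [hbdd] with ω hω
      exact div_nonneg hω.1.le (by positivity)
  set I₀ : ℝ := ∫ ω, f₀ ω with hI₀def
  have κval : ∫ ω, F' (a:ℂ) ω = ((-I₀ : ℝ) : ℂ) := by
    have hface : F' (a:ℂ) = fun ω => ((-(f₀ ω) : ℝ) : ℂ) := by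
      funext ω; rw [hF'def, hf₀def]; push_cast; ring
    have κ2 : ∫ ω, ((-(f₀ ω) : ℝ) : ℂ) = (((∫ ω, -(f₀ ω)) : ℝ) : ℂ) := integral_ofReal
    show ∫ ω, F' (a:ℂ) ω = ((-I₀ : ℝ) : ℂ)
    rw [hface, κ2, integral_neg]
  set c₀ : ℂ := ((ρ * (-I₀) : ℝ) : ℂ) with hc₀def
  have hga : HasDerivAt g c₀ (a:ℂ) := by
    have := (hIntDeriv (a:ℂ) haH).const_mul (ρ:ℂ)
    rw [κval] at this
    refine this.congr_deriv ?_
    rw [hc₀def]; push_cast; ring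
  have hc₀ne : c₀ ≠ 0 := by
    rw [hc₀def, Complex.ofReal_ne_zero]
    have : ρ * I₀ > 0 := mul_pos hρ posf₀
    intro h; rw [mul_neg] at h; simp at h; rcases h with h | h <;> linarith
  -- the function h and its derivative at a
  set h : ℂ → ℂ := fun w => (1 - g w) * w⁻¹ with hhdef
  set c : ℂ := -c₀ * (a:ℂ)⁻¹ with hcdef
  have hcne : c ≠ 0 := mul_ne_zero (neg_ne_zero.2 hc₀ne) (inv_ne_zero hane)
  have hDa : HasDerivAt h c (a:ℂ) := by
    have h1 : HasDerivAt (fun w => 1 - g w) (-c₀) (a:ℂ) := by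
      exact ((hasDerivAt_const (a:ℂ) (1:ℂ)).sub hga).congr_deriv (zero_sub c₀)
    have h2 : HasDerivAt (fun w : ℂ => w⁻¹) (-(((a:ℂ)) ^ 2)⁻¹) (a:ℂ) := hasDerivAt_inv hane
    have : HasDerivAt h (-c₀ * (a:ℂ)⁻¹ + (1 - g (a:ℂ)) * (-(((a:ℂ)) ^ 2)⁻¹)) (a:ℂ) := h1.mul h2
    rw [ga1] at this
    simpa [hcdef] using this
  -- differentiability of h on H
  have gdiffOn : DifferentiableOn ℂ g H := fun w hw =>
    (((hIntDeriv w hw).const_mul (ρ:ℂ)).differentiableAt).differentiableWithinAt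
  have hdiffOn : DifferentiableOn ℂ h H := by
    refine DifferentiableOn.mul ((differentiableOn_const 1).sub gdiffOn) ?_
    exact fun w hw => (differentiableAt_inv (hH0 w hw)).differentiableWithinAt
  -- strict derivative via analyticity
  have hA : AnalyticAt ℂ h (a:ℂ) := hdiffOn.analyticAt (Hopen.mem_nhds haH)
  obtain ⟨p, hp⟩ := hA
  have strict : HasStrictDerivAt h c (a:ℂ) := by
    have hs := hp.hasStrictDerivAt
    rwa [hp.hasDerivAt.unique hDa] at hs
  -- local inverse
  set sF := strict.hasStrictFDerivAt_equiv hcne with hsFdef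
  set Φ := sF.toOpenPartialHomeomorph h with hΦdef
  have Φcoe : ⇑Φ = h := sF.toOpenPartialHomeomorph_coe
  have ha_src : (a:ℂ) ∈ Φ.source := sF.mem_toOpenPartialHomeomorph_source
  have h_a0 : h (a:ℂ) = 0 := by rw [hhdef]; simp [ga1]
  have h0_tgt : (0:ℂ) ∈ Φ.target := by
    have := sF.image_mem_toOpenPartialHomeomorph_target
    rwa [h_a0] at this
  set q : ℂ → ℂ := ⇑(Φ.symm) with hqdef
  have q0 : q 0 = (a:ℂ) := by
    have := Φ.left_inv ha_src
    rw [hqdef, ← h_a0, ← Φcoe]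
    exact this
  -- neighborhood V where deriv h ≠ 0
  have hAnOn : AnalyticOnNhd ℂ h H := hdiffOn.analyticOnNhd Hopen
  have derivCont : ContinuousOn (deriv h) H := (hAnOn.deriv).continuousOn
  set V : Set ℂ := H ∩ deriv h ⁻¹' {(0:ℂ)}ᶜ with hVdef
  have Vopen : IsOpen V := derivCont.isOpen_inter_preimage Hopen isOpen_compl_singleton
  have haV : (a:ℂ) ∈ V := by
    refine ⟨haH, ?_⟩
    simp only [Set.mem_preimage, Set.mem_compl_iff, Set.mem_singleton_iff]
    rw [hDa.deriv]; exact hcne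
  set U : Set ℂ := Φ.target ∩ q ⁻¹' V with hUdef
  have Uopen : IsOpen U := by
    have := (Φ.continuousOn_symm).isOpen_inter_preimage Φ.open_target Vopen
    exact this
  have h0U : (0:ℂ) ∈ U := ⟨h0_tgt, by simp only [Set.mem_preimage]; rw [q0]; exact haV⟩
  have hright : ∀ z ∈ Φ.target, h (q z) = z := by
    intro z hz
    have := Φ.right_inv hz
    rw [Φcoe] at this
    exact this
  have qderiv : ∀ z ∈ U, HasDerivAt q (deriv h (q z))⁻¹ z := by
    intro z hz
    have hqzV : q z ∈ V := hz.2
    have hqzH : q z ∈ H := hqzV.1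
    have hd : HasDerivAt h (deriv h (q z)) (q z) :=
      (hdiffOn.differentiableAt (Hopen.mem_nhds hqzH)).hasDerivAt
    refine HasDerivAt.of_local_left_inverse ?_ hd hqzV.2 ?_
    · exact Φ.symm.continuousAt (by rw [Φ.symm_source]; exact hz.1)
    · filter_upwards [Φ.open_target.eventually_mem hz.1] with y hy
      exact hright y hy
  have qdiffOn : DifferentiableOn ℂ q U := fun z hz =>
    ((qderiv z hz).differentiableAt).differentiableWithinAt
  -- the main equation
  have hmain : ∀ z ∈ U, z * q z + (ρ:ℂ) * ∫ ω, (X ω : ℂ) * q z / ((X ω : ℂ) * q z - 1) = 1 := by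
    intro z hz
    have heq : h (q z) = z := hright z hz.1
    have hqne : q z ≠ 0 := hH0 _ hz.2.1
    rw [hhdef] at heq
    simp only at heq
    rw [mul_inv_eq_iff_eq_mul₀ hqne] at heq
    have h2 : g (q z) = (ρ:ℂ) * ∫ ω, (X ω : ℂ) * q z / ((X ω : ℂ) * q z - 1) := by
      rw [hgdef]
    linear_combination -heq - h2
  refine ⟨U, Uopen, h0U, q, qdiffOn, q0, hmain, ?_, ?_, ?_, ?_⟩
  · exact (differentiableOn_id).mul qdiffOn
  · simp
  · have hm0 : HasDerivAt (fun z => z * q z) (1 * q 0 + 0 * (deriv h (q 0))⁻¹) 0 := (hasDerivAt_id' (x := (0:ℂ))).mul (qderiv 0 h0U)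
    rw [hm0.deriv, q0]
    simp
  · intro z hz hzne
    have hqzH : q z ∈ H := hz.2.1
    have hint : (∫ ω, (X ω : ℂ) * (z * q z) / ((X ω : ℂ) * (z * q z) - z))
        = ∫ ω, (X ω : ℂ) * q z / ((X ω : ℂ) * q z - 1) := by
      refine integral_congr_ae ?_
      filter_upwards [hbdd] with ω hω
      have hd1 : (X ω : ℂ) * q z - 1 ≠ 0 := aux_ne_zero (q z) hqzH hω.1
      rw [show (X ω : ℂ) * (z * q z) - z = z * ((X ω : ℂ) * q z - 1) from by ring,
        show (X ω : ℂ) * (z * q z) = z * ((X ω : ℂ) * q z) from by ring,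
        mul_div_mul_left _ _ hzne]
    rw [hint]
    exact hmain z hz
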